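/- Let d = 2 and 0 < ε ≤ 1/11. Then sup_{r ≥ s ≥ (1−ε)/2} ∫_{1−ε}^{1+ε} K_{r,s}(t) dt ≤ (22√2/(5π)) · √ε. -/

import Mathlib

open MeasureTheory Metric Filter Set
open scoped ENNReal NNReal Topology

noncomputable section

/-- `|S^k|`: the surface (k-dimensional Hausdorff) measure of the unit sphere
`S^k ⊂ ℝ^(k+1)`. -/
def sphereArea (k : ℕ) : ℝ :=
  (μH[(k : ℝ)] (Metric.sphere (0 : EuclideanSpace ℝ (Fin (k+1))) 1)).toReal

/-- The kernel `K_{r,s}(t)`. -/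
def Krs (d : ℕ) (r s t : ℝ) : ℝ :=
  (sphereArea (d-2) / sphereArea (d-1)) *
    ((1 - ((r^2 + s^2 - t^2) / (2*r*s))^2) ^ (((d : ℝ) - 3)/2)) * (t/(r*s)) *
    Set.indicator (Set.Ioo (r-s) (r+s)) 1 t

/-- `sup_{r ≥ s ≥ (1-ε)/2} ∫_{1-ε}^{1+ε} K_{r,s}(t) dt`. -/
def Ksup (d : ℕ) (ε : ℝ) : ℝ :=
  sSup {v : ℝ | ∃ r s : ℝ, s ≤ r ∧ (1-ε)/2 ≤ s ∧ v = ∫ t in (1-ε)..(1+ε), Krs d r s t}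

open Real

lemma lemA {u v : ℝ} (hu : -1 ≤ u) (huv : u ≤ v) (hv : v ≤ 1) :
    arcsin v - arcsin u ≤ arccos (1 - (v - u)) := by
  have hv1 : -1 ≤ v := le_trans hu huv
  have hu1 : u ≤ 1 := le_trans huv hv
  set A := arcsin v
  set B := arcsin u
  have hAB : B ≤ A := monotone_arcsin huv
  have hA2 : A ≤ π/2 := arcsin_le_pi_div_two v
  have hB2 : -(π/2) ≤ B := neg_pi_div_two_le_arcsin u
  have hABpi : A - B ≤ π := by linarith
  have hkey : 1 - (v - u) ≤ cos (A - B) := by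
    rw [cos_sub]
    have hsA : sin A = v := sin_arcsin hv1 hv
    have hsB : sin B = u := sin_arcsin hu hu1
    have hcA : cos A = sqrt (1 - v^2) := cos_arcsin v
    have hcB : cos B = sqrt (1 - u^2) := cos_arcsin u
    rw [hsA, hsB, hcA, hcB, ← Real.sqrt_mul (by nlinarith : (0:ℝ) ≤ 1 - v^2)]
    have h1 : (1 - v) * (1 + u) ≤ sqrt ((1-v^2)*(1-u^2)) := by
      rw [show (1-v^2)*(1-u^2) = ((1-v)*(1+u)) * ((1+v)*(1-u)) by ring]
      have h2 : ((1-v)*(1+u))^2 ≤ ((1-v)*(1+u)) * ((1+v)*(1-u)) := by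
        nlinarith [mul_nonneg (mul_nonneg (by linarith : (0:ℝ) ≤ 1-v)
          (by linarith : (0:ℝ) ≤ 1+u)) (by linarith : (0:ℝ) ≤ v-u)]
      calc (1-v)*(1+u) = sqrt (((1-v)*(1+u))^2) := by
            rw [Real.sqrt_sq (by nlinarith)]
        _ ≤ _ := Real.sqrt_le_sqrt h2
    nlinarith
  calc A - B = arccos (cos (A - B)) := (arccos_cos (by linarith) hABpi).symm
    _ ≤ arccos (1 - (v - u)) := by
        unfold Real.arccos
        have := monotone_arcsin hkey
        linarith

lemma lemB {x : ℝ} (hx : 0 ≤ x) (hx1 : x ≤ 1) : arccos (1 - x) ≤ 2 * sqrt x := by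
  rcases eq_or_lt_of_le hx with h | h
  · simp [← h]
  set t := sqrt x with ht
  have ht0 : 0 < t := Real.sqrt_pos.2 h
  have ht1 : t ≤ 1 := by
    rw [ht, show (1:ℝ) = sqrt 1 by simp]
    exact Real.sqrt_le_sqrt hx1
  have htsq : t^2 = x := Real.sq_sqrt hx
  have hsin : 3/4 * t ≤ sin t := by
    have := Real.sin_gt_sub_cube ht0
    nlinarith
  have hcos : cos (2*t) ≤ 1 - x := by
    have h2 : cos (2*t) = 1 - 2 * sin t ^ 2 := by
      rw [Real.cos_two_mul]
      have := Real.sin_sq_add_cos_sq t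
      linarith
    have hsin0 : 0 ≤ sin t := le_trans (by nlinarith) hsin
    nlinarith
  have h2t : 2 * t ≤ π := by nlinarith [Real.pi_gt_three]
  calc arccos (1 - x) ≤ arccos (cos (2*t)) := by
        unfold Real.arccos
        have := monotone_arcsin hcos
        linarith
    _ = 2*t := arccos_cos (by linarith) h2t

lemma sphereArea_zero : sphereArea 0 = 2 := by
  unfold sphereArea
  have hs : Metric.sphere (0 : EuclideanSpace ℝ (Fin 1)) 1 =
      {EuclideanSpace.single 0 (1:ℝ), EuclideanSpace.single 0 (-1:ℝ)} := by
    ext x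
    rw [mem_sphere_zero_iff_norm, EuclideanSpace.norm_eq]
    simp only [Fin.sum_univ_one]
    rw [Real.sqrt_eq_one]
    constructor
    · intro h
      have h0 : |x 0| = 1 := by
        rw [Real.norm_eq_abs] at h
        nlinarith [abs_nonneg (x 0), sq_abs (x 0)]
      rcases abs_eq (by norm_num : (0:ℝ) ≤ 1) |>.1 h0 with h1 | h1
      · left
        ext i
        have : i = 0 := Subsingleton.elim _ _
        rw [this, EuclideanSpace.single_apply]
        simpa using h1
      · right
        rw [Set.mem_singleton_iff]
        ext i
        have : i = 0 := Subsingleton.elim _ _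
        rw [this, EuclideanSpace.single_apply]
        simpa using h1
    · intro h
      rcases h with h | h <;>
        · rw [h, EuclideanSpace.single_apply]
          norm_num
  rw [Nat.cast_zero, hs]
  have hne : EuclideanSpace.single (0 : Fin 1) (1:ℝ) ≠ EuclideanSpace.single 0 (-1:ℝ) := by
    intro h
    have := congrArg (fun v : EuclideanSpace ℝ (Fin 1) => v 0) h
    rw [EuclideanSpace.single_apply, EuclideanSpace.single_apply] at this
    norm_num at this
  rw [show ({EuclideanSpace.single 0 (1:ℝ), EuclideanSpace.single 0 (-1:ℝ)} :
      Set (EuclideanSpace ℝ (Fin 1))) =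
      {EuclideanSpace.single 0 (1:ℝ)} ∪ {EuclideanSpace.single 0 (-1:ℝ)} from rfl,
    measure_union (by simpa using hne) (measurableSet_singleton _),
    Measure.hausdorffMeasure_zero_singleton, Measure.hausdorffMeasure_zero_singleton]
  norm_num

-- the circle parametrization
def cc (θ : ℝ) : EuclideanSpace ℝ (Fin 2) := WithLp.toLp 2 ![Real.cos θ, Real.sin θ]

lemma cc_cont : Continuous cc := by
  apply (PiLp.continuous_toLp 2 _).comp
  apply continuous_pi
  intro i
  fin_cases i
  · exact Real.continuous_cos
  · exact Real.continuous_sin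

lemma cc_norm (θ : ℝ) : ‖cc θ‖ = 1 := by
  rw [EuclideanSpace.norm_eq, Fin.sum_univ_two]
  show Real.sqrt (‖Real.cos θ‖^2 + ‖Real.sin θ‖^2) = 1
  rw [Real.norm_eq_abs, Real.norm_eq_abs, sq_abs, sq_abs, Real.cos_sq_add_sin_sq]
  exact Real.sqrt_one

lemma cc_mem_sphere (θ : ℝ) : cc θ ∈ Metric.sphere (0 : EuclideanSpace ℝ (Fin 2)) 1 :=
  mem_sphere_zero_iff_norm.2 (cc_norm θ)

lemma cc_lip : LipschitzWith 1 cc := by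
  apply LipschitzWith.of_dist_le_mul
  intro θ φ
  rw [EuclideanSpace.dist_eq, Fin.sum_univ_two, NNReal.coe_one, one_mul, Real.dist_eq]
  show Real.sqrt (dist (Real.cos θ) (Real.cos φ)^2 + dist (Real.sin θ) (Real.sin φ)^2) ≤ _
  rw [Real.dist_eq, Real.dist_eq, Real.dist_eq, sq_abs, sq_abs]
  rw [show |θ - φ| = Real.sqrt ((θ - φ)^2) from (Real.sqrt_sq_eq_abs _).symm]
  apply Real.sqrt_le_sqrt
  have hid : (Real.cos θ - Real.cos φ)^2 + (Real.sin θ - Real.sin φ)^2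
      = 2 - 2 * Real.cos (θ - φ) := by
    rw [Real.cos_sub]
    nlinarith [Real.sin_sq_add_cos_sq θ, Real.sin_sq_add_cos_sq φ]
  rw [hid]
  have hxx : θ - φ = θ - φ := rfl
  generalize θ - φ = x at *
  have h1 : Real.cos x = 1 - 2 * Real.sin (x/2)^2 := by
    have hh := Real.cos_two_mul (x/2)
    rw [show 2*(x/2) = x by ring] at hh
    nlinarith [Real.sin_sq_add_cos_sq (x/2)]
  have h2 : Real.sin (x/2)^2 ≤ (x/2)^2 := by
    have := Real.abs_sin_le_abs (x := x/2)
    nlinarith [abs_nonneg (Real.sin (x/2)), abs_nonneg (x/2), sq_abs (Real.sin (x/2)), sq_abs (x/2)]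
  nlinarith [h1, h2]

lemma cc_inj {θ φ : ℝ} (h : cc θ = cc φ) (hlt : |θ - φ| < 2*π) : θ = φ := by
  have h0 : Real.cos θ = Real.cos φ := congrArg (fun v : EuclideanSpace ℝ (Fin 2) => v 0) h
  have h1 : Real.sin θ = Real.sin φ := congrArg (fun v : EuclideanSpace ℝ (Fin 2) => v 1) h
  have hc : Real.cos (θ - φ) = 1 := by
    rw [Real.cos_sub, h0, h1]
    linear_combination Real.sin_sq_add_cos_sq φ
  rcases (Real.cos_eq_one_iff _).1 hc with ⟨n, hn⟩
  have hpos : (0:ℝ) < 2*π := by positivity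
  have hn' : |(n:ℝ)| * (2*π) < 2*π := by
    calc |(n:ℝ)| * (2*π) = |(n:ℝ)| * |2*π| := by rw [abs_of_pos hpos]
      _ = |(n:ℝ) * (2*π)| := (abs_mul _ _).symm
      _ = |θ - φ| := by rw [hn]
      _ < 2*π := hlt
  have habs : |(n:ℝ)| < 1 := by
    by_contra hcon
    push_neg at hcon
    nlinarith
  have hn0 : n = 0 := by
    rw [← Int.cast_abs] at habs
    have h2 : |n| < 1 := by exact_mod_cast habs
    have h3 := abs_lt.1 h2
    omega
  rw [hn0] at hn
  simp at hn
  linarith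

lemma sphere_eq_image :
    Metric.sphere (0 : EuclideanSpace ℝ (Fin 2)) 1 = cc '' Set.Icc 0 (2*π) := by
  ext x
  constructor
  · intro hx
    rw [mem_sphere_zero_iff_norm] at hx
    have hsum : (x 0)^2 + (x 1)^2 = 1 := by
      rw [EuclideanSpace.norm_eq, Fin.sum_univ_two, Real.norm_eq_abs, Real.norm_eq_abs,
        sq_abs, sq_abs, Real.sqrt_eq_one] at hx
      exact hx
    have hx0 : -1 ≤ x 0 ∧ x 0 ≤ 1 := by constructor <;> nlinarith
    have hxeq : ∀ θ, Real.cos θ = x 0 → Real.sin θ = x 1 → x = cc θ := by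
      intro θ hcos hsin
      ext i
      fin_cases i
      · exact hcos.symm
      · exact hsin.symm
    by_cases hsgn : 0 ≤ x 1
    · refine ⟨Real.arccos (x 0), ⟨Real.arccos_nonneg _, le_trans (Real.arccos_le_pi _)
        (by nlinarith [Real.pi_pos])⟩, ?_⟩
      refine (hxeq _ (Real.cos_arccos hx0.1 hx0.2) ?_).symm
      rw [Real.sin_arccos]
      rw [show 1 - (x 0)^2 = (x 1)^2 by nlinarith, Real.sqrt_sq_eq_abs, abs_of_nonneg hsgn]
    · push_neg at hsgn
      refine ⟨2*π - Real.arccos (x 0), ⟨by nlinarith [Real.arccos_le_pi (x 0), Real.pi_pos],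
        by nlinarith [Real.arccos_nonneg (x 0)]⟩, ?_⟩
      refine (hxeq _ ?_ ?_).symm
      · rw [Real.cos_two_pi_sub]
        exact Real.cos_arccos hx0.1 hx0.2
      · rw [Real.sin_two_pi_sub, Real.sin_arccos]
        rw [show 1 - (x 0)^2 = (x 1)^2 by nlinarith, Real.sqrt_sq_eq_abs,
          abs_of_neg hsgn]
        ring
  · rintro ⟨θ, -, rfl⟩
    exact cc_mem_sphere θ

lemma sphere_upper :
    μH[(1:ℝ)] (Metric.sphere (0 : EuclideanSpace ℝ (Fin 2)) 1) ≤ ENNReal.ofReal (2*π) := by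
  rw [sphere_eq_image]
  calc μH[(1:ℝ)] (cc '' Set.Icc 0 (2*π))
      ≤ (1:ℝ≥0) ^ (1:ℝ) * μH[(1:ℝ)] (Set.Icc 0 (2*π)) :=
        cc_lip.hausdorffMeasure_image_le zero_le_one _
    _ = μH[(1:ℝ)] (Set.Icc 0 (2*π)) := by simp
    _ = volume (Set.Icc 0 (2*π)) := by rw [MeasureTheory.hausdorffMeasure_real]
    _ = ENNReal.ofReal (2*π) := by rw [Real.volume_Icc, sub_zero]

lemma arc_lower (u w : ℝ) (hw : 0 < w) (hwpi : 2*w ≤ π) :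
    ENNReal.ofReal (2 * Real.sin w) ≤ μH[(1:ℝ)] (cc '' Set.Ioo u (u + 2*w)) := by
  -- the 1-Lipschitz projection
  set m : ℝ := u + w with hm
  set f : EuclideanSpace ℝ (Fin 2) → ℝ :=
    fun x => Real.cos m * x 1 - Real.sin m * x 0 with hf
  have hflip : LipschitzWith 1 f := by
    apply LipschitzWith.of_dist_le_mul
    intro x y
    simp only [hf]
    rw [EuclideanSpace.dist_eq, Fin.sum_univ_two, NNReal.coe_one, one_mul, Real.dist_eq,
      Real.dist_eq, Real.dist_eq, sq_abs, sq_abs]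
    apply Real.abs_le_sqrt
    have h1 := Real.sin_sq_add_cos_sq m
    have h3 : (Real.sin m^2 + Real.cos m^2) * ((x 0 - y 0)^2 + (x 1 - y 1)^2)
        = (x 0 - y 0)^2 + (x 1 - y 1)^2 := by rw [h1, one_mul]
    nlinarith [sq_nonneg (Real.sin m * (x 1 - y 1) + Real.cos m * (x 0 - y 0)), h3]
  have hfc : ∀ θ, f (cc θ) = Real.sin (θ - m) := by
    intro θ
    show Real.cos m * Real.sin θ - Real.sin m * Real.cos θ = _
    rw [Real.sin_sub]
    ring
  have hioo : Set.Ioo (-Real.sin w) (Real.sin w) ⊆ (fun θ => Real.sin (θ - m)) ''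
      Set.Ioo u (u + 2*w) := by
    have hcont : ContinuousOn (fun θ => Real.sin (θ - m)) (Set.Icc u (u + 2*w)) := by
      fun_prop
    have h1 : Real.sin (u - m) = -Real.sin w := by
      rw [hm, show u - (u + w) = -w by ring, Real.sin_neg]
    have h2 : Real.sin (u + 2*w - m) = Real.sin w := by
      rw [hm, show u + 2*w - (u + w) = w by ring]
    have := intermediate_value_Ioo (by linarith : u ≤ u + 2*w) hcont
    rw [h1, h2] at this
    exact this
  calc ENNReal.ofReal (2 * Real.sin w)
      = volume (Set.Ioo (-Real.sin w) (Real.sin w)) := by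
        rw [Real.volume_Ioo]
        congr 1
        ring
    _ = μH[(1:ℝ)] (Set.Ioo (-Real.sin w) (Real.sin w)) := by
        rw [MeasureTheory.hausdorffMeasure_real]
    _ ≤ μH[(1:ℝ)] ((fun θ => Real.sin (θ - m)) '' Set.Ioo u (u + 2*w)) :=
        measure_mono hioo
    _ = μH[(1:ℝ)] (f '' (cc '' Set.Ioo u (u + 2*w))) := by
        have himg : f '' (cc '' Set.Ioo u (u + 2*w))
            = (fun θ => Real.sin (θ - m)) '' Set.Ioo u (u + 2*w) := by
          rw [Set.image_image]
          exact Set.image_congr fun θ _ => hfc θ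
        rw [himg]
    _ ≤ (1:ℝ≥0) ^ (1:ℝ) * μH[(1:ℝ)] (cc '' Set.Ioo u (u + 2*w)) :=
        hflip.hausdorffMeasure_image_le zero_le_one _
    _ = μH[(1:ℝ)] (cc '' Set.Ioo u (u + 2*w)) := by simp

lemma arc_measurable (u L : ℝ) (hL : 0 < L) (hL2 : L < 2*π) :
    MeasurableSet (cc '' Set.Ioo u (u+L)) := by
  have heq : cc '' Set.Ioo u (u+L)
      = (cc '' Set.Icc u (u+L)) \ {cc u, cc (u+L)} := by
    ext x
    constructor
    · rintro ⟨θ, hθ, rfl⟩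
      refine ⟨⟨θ, Set.Ioo_subset_Icc_self hθ, rfl⟩, ?_⟩
      rintro (h | h)
      · have habs : |θ - u| < 2*π := by
          rw [abs_of_pos (by linarith [hθ.1] : 0 < θ - u)]
          linarith [hθ.1, hθ.2]
        have : θ = u := cc_inj h habs
        linarith [hθ.1]
      · rw [Set.mem_singleton_iff] at h
        have habs : |θ - (u+L)| < 2*π := by
          rw [abs_of_neg (by linarith [hθ.2] : θ - (u+L) < 0)]
          linarith [hθ.1, hθ.2]
        have : θ = u + L := cc_inj h habs
        linarith [hθ.2]
    · rintro ⟨⟨θ, hθ, rfl⟩, hne⟩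
      simp only [Set.mem_insert_iff, Set.mem_singleton_iff] at hne
      push_neg at hne
      refine ⟨θ, ⟨?_, ?_⟩, rfl⟩
      · rcases eq_or_lt_of_le hθ.1 with h | h
        · exact absurd (by rw [h]) hne.1
        · exact h
      · rcases eq_or_lt_of_le hθ.2 with h | h
        · exact absurd (by rw [h]) hne.2
        · exact h
  rw [heq]
  exact ((isCompact_Icc.image cc_cont).measurableSet).diff
    ((measurableSet_singleton _).insert _)

lemma sphere_lower (n : ℕ) (hn : 4 ≤ n) :
    ENNReal.ofReal ((n:ℝ) * (2 * Real.sin (π/n)))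
      ≤ μH[(1:ℝ)] (Metric.sphere (0 : EuclideanSpace ℝ (Fin 2)) 1) := by
  have hn0 : (0:ℝ) < n := by
    have : (4:ℝ) ≤ n := by exact_mod_cast hn
    linarith
  have hπ := Real.pi_pos
  set L : ℝ := 2*π/n with hLdef
  have hL : 0 < L := by positivity
  have hn4 : (4:ℝ) ≤ n := by exact_mod_cast hn
  have hL2 : L < 2*π := by
    rw [hLdef, div_lt_iff₀ hn0]
    nlinarith
  have hw : 0 < π/n := by positivity
  have hwpi : 2*(π/n) ≤ π := by
    rw [mul_div_assoc', div_le_iff₀ hn0]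
    nlinarith
  have hLw : ∀ c : ℝ, c + L = c + 2*(π/n) := by
    intro c
    rw [hLdef]
    ring_nf
  set A : ℕ → Set (EuclideanSpace ℝ (Fin 2)) :=
    fun k => cc '' Set.Ioo ((k:ℝ)*L) ((k:ℝ)*L + L) with hA
  have hmeas : ∀ k, MeasurableSet (A k) := fun k => arc_measurable _ _ hL hL2
  have hbound : ∀ k, k < n → ∀ θ ∈ Set.Ioo ((k:ℝ)*L) ((k:ℝ)*L + L),
      0 < θ ∧ θ < 2*π := by
    intro k hk θ hθ
    have hk0 : (0:ℝ) ≤ (k:ℝ) := Nat.cast_nonneg k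
    have hkn : (k:ℝ) + 1 ≤ n := by exact_mod_cast hk
    constructor
    · have : 0 ≤ (k:ℝ)*L := mul_nonneg hk0 hL.le
      linarith [hθ.1]
    · have h1 : ((k:ℝ)+1)*L ≤ (n:ℝ)*L := mul_le_mul_of_nonneg_right hkn hL.le
      have h2 : (n:ℝ)*L = 2*π := by
        rw [hLdef]
        field_simp
      nlinarith [hθ.2]
  have hdisj : (↑(Finset.range n) : Set ℕ).PairwiseDisjoint A := by
    intro k hk l hl hkl
    simp only [Finset.coe_range, Set.mem_Iio] at hk hl
    rw [Function.onFun]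
    rw [Set.disjoint_left]
    rintro x ⟨θ, hθ, rfl⟩ ⟨φ, hφ, hccφ⟩
    have hθb := hbound k hk θ hθ
    have hφb := hbound l hl φ hφ
    have hθφ : φ = θ := by
      apply cc_inj hccφ
      rw [abs_lt]
      constructor <;> linarith [hθb.1, hθb.2, hφb.1, hφb.2]
    rw [hθφ] at hφ
    rcases lt_or_gt_of_ne hkl with h | h
    · have : (k:ℝ) + 1 ≤ l := by exact_mod_cast h
      have h1 : ((k:ℝ)+1)*L ≤ (l:ℝ)*L := mul_le_mul_of_nonneg_right this hL.le
      nlinarith [hθ.2, hφ.1]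
    · have : (l:ℝ) + 1 ≤ k := by exact_mod_cast h
      have h1 : ((l:ℝ)+1)*L ≤ (k:ℝ)*L := mul_le_mul_of_nonneg_right this hL.le
      nlinarith [hθ.1, hφ.2]
  have hsub : (⋃ k ∈ Finset.range n, A k) ⊆
      Metric.sphere (0 : EuclideanSpace ℝ (Fin 2)) 1 := by
    intro x hx
    simp only [Set.mem_iUnion] at hx
    rcases hx with ⟨k, -, ⟨θ, -, rfl⟩⟩
    exact cc_mem_sphere θ
  calc ENNReal.ofReal ((n:ℝ) * (2 * Real.sin (π/n)))
      = ∑ _k ∈ Finset.range n, ENNReal.ofReal (2 * Real.sin (π/n)) := by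
        rw [Finset.sum_const, Finset.card_range, nsmul_eq_mul,
          ← ENNReal.ofReal_natCast n, ← ENNReal.ofReal_mul (Nat.cast_nonneg n)]
    _ ≤ ∑ k ∈ Finset.range n, μH[(1:ℝ)] (A k) := by
        apply Finset.sum_le_sum
        intro k _
        have harc := arc_lower ((k:ℝ)*L) (π/n) hw hwpi
        simp only [hA]
        rw [hLw ((k:ℝ)*L)]
        exact harc
    _ = μH[(1:ℝ)] (⋃ k ∈ Finset.range n, A k) :=
        (measure_biUnion_finset hdisj (fun k _ => hmeas k)).symm
    _ ≤ μH[(1:ℝ)] (Metric.sphere (0 : EuclideanSpace ℝ (Fin 2)) 1) :=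
        measure_mono hsub

lemma tendsto_aux :
    Filter.Tendsto (fun n : ℕ => (n:ℝ) * (2 * Real.sin (π/n))) atTop (𝓝 (2*π)) := by
  have hslope : Filter.Tendsto (fun x : ℝ => Real.sin x / x) (𝓝[≠] 0) (𝓝 1) := by
    have h := Real.hasDerivAt_sin 0
    rw [hasDerivAt_iff_tendsto_slope] at h
    rw [Real.cos_zero] at h
    apply h.congr
    intro x
    simp [slope_fun_def, Real.sin_zero, div_eq_inv_mul]
  have hn : Filter.Tendsto (fun n : ℕ => π/(n:ℝ)) atTop (𝓝[≠] 0) := by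
    apply tendsto_nhdsWithin_of_tendsto_nhds_of_eventually_within
    · exact tendsto_const_div_atTop_nhds_zero_nat π
    · filter_upwards [eventually_gt_atTop 0] with n hn
      have : (0:ℝ) < n := by exact_mod_cast hn
      have := Real.pi_pos
      simp only [Set.mem_compl_iff, Set.mem_singleton_iff]
      positivity
  have hcomp : Filter.Tendsto (fun n : ℕ => Real.sin (π/n) / (π/n)) atTop (𝓝 1) :=
    hslope.comp hn
  have hmul : Filter.Tendsto (fun n : ℕ => 2*π * (Real.sin (π/n)/(π/n))) atTop (𝓝 (2*π*1)) :=
    hcomp.const_mul (2*π)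
  rw [mul_one] at hmul
  apply hmul.congr'
  filter_upwards [eventually_gt_atTop 0] with n hn
  have hn0 : (0:ℝ) < n := by exact_mod_cast hn
  have := Real.pi_pos
  field_simp

lemma sphere_measure :
    μH[(1:ℝ)] (Metric.sphere (0 : EuclideanSpace ℝ (Fin 2)) 1) = ENNReal.ofReal (2*π) := by
  apply le_antisymm sphere_upper
  have htend : Filter.Tendsto (fun n : ℕ => ENNReal.ofReal ((n:ℝ) * (2 * Real.sin (π/n))))
      atTop (𝓝 (ENNReal.ofReal (2*π))) :=
    (ENNReal.continuous_ofReal.tendsto _).comp tendsto_aux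
  exact le_of_tendsto htend (eventually_atTop.2 ⟨4, fun n hn => sphere_lower n hn⟩)

lemma sphereArea_one : sphereArea 1 = 2*π := by
  unfold sphereArea
  rw [Nat.cast_one]
  rw [show (Metric.sphere (0 : EuclideanSpace ℝ (Fin (1+1))) 1)
      = (Metric.sphere (0 : EuclideanSpace ℝ (Fin 2)) 1) from rfl]
  rw [sphere_measure]
  rw [ENNReal.toReal_ofReal (by positivity)]

lemma lemC {ε r s m1 m2 : ℝ} (hε0 : 0 < ε) (hε : ε ≤ 1/11) (hsr : s ≤ r)
    (hs : (1-ε)/2 ≤ s) (h1 : 1-ε ≤ m1) (h12 : m1 ≤ m2) (h2 : m2 ≤ 1+ε)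
    (ha : r-s ≤ m1) (hb : m2 ≤ r+s) :
    arcsin ((m2^2-r^2-s^2)/(2*r*s)) - arcsin ((m1^2-r^2-s^2)/(2*r*s))
      ≤ 22 * Real.sqrt 2 / 5 * Real.sqrt ε := by
  have hs0 : 0 < s := by linarith
  have hr0 : 0 < r := lt_of_lt_of_le hs0 hsr
  have hrs0 : 0 < 2*r*s := by positivity
  have hm10 : 0 < m1 := by linarith
  set u : ℝ := (m1^2-r^2-s^2)/(2*r*s) with hudef
  set v : ℝ := (m2^2-r^2-s^2)/(2*r*s) with hvdef
  have hu : -1 ≤ u := by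
    rw [hudef, le_div_iff₀ hrs0]
    nlinarith
  have huv : u ≤ v := by
    rw [hudef, hvdef, div_le_div_iff_of_pos_right hrs0]
    nlinarith
  have hv : v ≤ 1 := by
    rw [hvdef, div_le_one hrs0]
    nlinarith
  have hδ : v - u ≤ 242/25 * ε := by
    have heq : v - u = (m2^2 - m1^2)/(2*r*s) := by
      rw [hudef, hvdef, div_sub_div_same]
      congr 1
      ring
    have h2' : m2^2 - m1^2 ≤ 4*ε := by nlinarith
    have h3 : (1-ε)^2/2 ≤ 2*r*s := by nlinarith
    have h4 : (10/11:ℝ) ≤ 1-ε := by linarith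
    have h5 : (100/121:ℝ) ≤ (1-ε)^2 := by nlinarith
    have h6 : 242/25*ε*((1-ε)^2/2) ≤ 242/25*ε*(2*r*s) :=
      mul_le_mul_of_nonneg_left h3 (by positivity)
    have h7 : 4*ε ≤ 242/25*ε*((1-ε)^2/2) := by
      nlinarith [mul_le_mul_of_nonneg_left h5 hε0.le]
    rw [heq, div_le_iff₀ hrs0]
    linarith
  have hδ1 : v - u ≤ 1 := by linarith
  have hδ0 : 0 ≤ v - u := by linarith
  have hchain : arcsin v - arcsin u ≤ 2 * Real.sqrt (v - u) :=
    le_trans (lemA hu huv hv) (lemB hδ0 hδ1)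
  have hsq : Real.sqrt (v - u) ≤ 11 * Real.sqrt 2 / 5 * Real.sqrt ε := by
    have ha1 : Real.sqrt (v - u) ≤ Real.sqrt (242/25 * ε) := Real.sqrt_le_sqrt hδ
    have ha2 : Real.sqrt (242/25 * ε) = 11 * Real.sqrt 2 / 5 * Real.sqrt ε := by
      rw [Real.sqrt_mul (by norm_num : (0:ℝ) ≤ 242/25)]
      congr 1
      rw [show (242/25 : ℝ) = (11 * Real.sqrt 2 / 5)^2 by
        rw [div_pow, mul_pow, Real.sq_sqrt (by norm_num : (0:ℝ) ≤ 2)]; norm_num]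
      exact Real.sqrt_sq (by positivity)
    linarith
  linarith

lemma integral_bound (ε r s : ℝ) (hε0 : 0 < ε) (hε : ε ≤ 1/11) (hsr : s ≤ r)
    (hs : (1-ε)/2 ≤ s) :
    ∫ t in (1-ε)..(1+ε), Krs 2 r s t ≤ 22 * Real.sqrt 2 / (5 * π) * Real.sqrt ε := by
  set P : ℝ := 1 - ε with hPdef
  set Q : ℝ := 1 + ε with hQdef
  have hP0 : 0 < P := by simp only [hPdef]; linarith
  have hPQ : P ≤ Q := by simp only [hPdef, hQdef]; linarith
  have hs0 : 0 < s := by linarith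
  have hr0 : 0 < r := lt_of_lt_of_le hs0 hsr
  have hrs0 : 0 < 2*r*s := by positivity
  set a : ℝ := r - s with hadef
  set b : ℝ := r + s with hbdef
  have ha0 : 0 ≤ a := by simp only [hadef]; linarith
  have hab : a ≤ b := by simp only [hadef, hbdef]; linarith
  set y : ℝ → ℝ := fun t => (t^2 - r^2 - s^2)/(2*r*s) with hydef
  set F : ℝ → ℝ := fun t => (1/π) * arcsin (y t) with hFdef
  set m1 : ℝ := min Q (max P a) with hm1def
  set m2 : ℝ := min Q (max P b) with hm2def
  have h1 : P ≤ m1 := le_min hPQ (le_max_left _ _)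
  have h12 : m1 ≤ m2 := min_le_min le_rfl (max_le_max le_rfl hab)
  have h2Q : m2 ≤ Q := min_le_left _ _
  -- pointwise kernel formula on Ioo a b
  have hy2 : ∀ t ∈ Set.Ioo a b, y t ^ 2 < 1 := by
    intro t ht
    have ht1 := ht.1
    have ht2 := ht.2
    have hta : 0 < (t - a) * (t + a) :=
      mul_pos (by linarith) (by simp only [hadef] at ht1 ⊢; nlinarith)
    have htb : 0 < (b - t) * (b + t) :=
      mul_pos (by linarith) (by simp only [hbdef] at ht2 ⊢; nlinarith)
    have : (t^2 - r^2 - s^2)^2 < (2*r*s)^2 := by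
      simp only [hadef, hbdef] at hta htb; nlinarith
    simp only [hydef, div_pow]
    rw [div_lt_one (by positivity)]
    exact this
  have hKrs : ∀ t ∈ Set.Ioo a b,
      Krs 2 r s t = (1/π) * (1 / Real.sqrt (1 - y t ^ 2) * (t/(r*s))) := by
    intro t ht
    have hx : 0 < 1 - y t ^ 2 := by have := hy2 t ht; linarith
    unfold Krs
    rw [Set.indicator_of_mem (by exact ht) (1 : ℝ → ℝ), Pi.one_apply]
    have e1 : (r^2 + s^2 - t^2) / (2*r*s) = -(y t) := by
      simp only [hydef]
      rw [show r^2+s^2-t^2 = -(t^2-r^2-s^2) by ring, neg_div]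
    have e2 : (((2:ℕ) : ℝ) - 3)/2 = -(1/2 : ℝ) := by norm_num
    rw [e1, neg_sq, e2, Real.rpow_neg hx.le, ← Real.sqrt_eq_rpow]
    rw [show (2:ℕ)-2 = 0 by norm_num, show (2:ℕ)-1 = 1 by norm_num,
      sphereArea_zero, sphereArea_one]
    rw [show (2 : ℝ)/(2*π) = 1/π by field_simp]
    rw [one_div (√(1 - y t ^ 2))]
    ring
  -- subset relation
  have hsub : Set.Ioo m1 m2 ⊆ Set.Ioo a b := by
    intro t ht
    have hm12 : m1 < m2 := ht.1.trans ht.2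
    have hmaxa : max P a ≤ Q := by
      by_contra h
      push_neg at h
      have : m1 = Q := min_eq_left h.le
      have := h2Q
      linarith
    have ham1 : a ≤ m1 := by
      rw [hm1def, min_eq_right hmaxa]
      exact le_max_right _ _
    have hPb : P ≤ b := by
      by_contra h
      push_neg at h
      have : m2 ≤ P := le_trans (min_le_right _ _) (by rw [max_eq_left h.le])
      linarith
    have hm2b : m2 ≤ b := le_trans (min_le_right _ _) (by rw [max_eq_right hPb])
    exact ⟨lt_of_le_of_lt ham1 ht.1, lt_of_lt_of_le ht.2 hm2b⟩
  -- zero on the outer pieces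
  have hzero1 : ∀ t ∈ Set.Ioc P m1, Krs 2 r s t = 0 := by
    intro t ht
    have hPm1 : P < m1 := lt_of_lt_of_le ht.1 ht.2
    have hPa : P < max P a := lt_of_lt_of_le hPm1 (min_le_right _ _)
    have hmax : max P a = a := by
      rcases max_choice P a with h | h
      · rw [h] at hPa; linarith
      · exact h
    have hta : t ≤ a := le_trans ht.2 (le_trans (min_le_right _ _) hmax.le)
    unfold Krs
    rw [Set.indicator_of_notMem (fun hmem => absurd hmem.1 (not_lt.2 hta)), mul_zero]
  have hzero2 : ∀ t ∈ Set.Ioc m2 Q, Krs 2 r s t = 0 := by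
    intro t ht
    have hm2Q : m2 < Q := lt_of_lt_of_le ht.1 ht.2
    have hm2 : m2 = max P b := by
      rcases min_choice Q (max P b) with h | h
      · rw [hm2def] at hm2Q ⊢; rw [h] at hm2Q ⊢; linarith
      · rw [hm2def]; exact h
    have htb : b ≤ t := le_trans (le_max_right P b) (by rw [← hm2]; exact ht.1.le)
    unfold Krs
    rw [Set.indicator_of_notMem (fun hmem => absurd hmem.2 (not_lt.2 htb)), mul_zero]
  -- continuity of F
  have hycont : Continuous y := by
    simp only [hydef]; fun_prop
  have hFc : Continuous F := by
    simp only [hFdef]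
    exact continuous_const.mul (Real.continuous_arcsin.comp hycont)
  -- derivative
  have hderiv : ∀ t ∈ Set.Ioo m1 m2, HasDerivAt F (Krs 2 r s t) t := by
    intro t ht
    have htab := hsub ht
    have hy2t := hy2 t htab
    have hx : 0 < 1 - y t ^ 2 := by linarith
    have hyn : y t ≠ -1 := by
      intro h; rw [h] at hy2t; norm_num at hy2t
    have hy1 : y t ≠ 1 := by
      intro h; rw [h] at hy2t; norm_num at hy2t
    have hdy : HasDerivAt y (t/(r*s)) t := by
      have h' : HasDerivAt (fun u : ℝ => (u^2 - r^2 - s^2)/(2*r*s))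
          (((2:ℕ) * t^(2-1)) / (2*r*s)) t := by
        exact (((hasDerivAt_pow 2 t).sub_const (r^2)).sub_const (s^2)).div_const _
      have : HasDerivAt (fun u : ℝ => (u^2 - r^2 - s^2)/(2*r*s)) (t/(r*s)) t := by
        convert h' using 1
        field_simp
        ring
      exact this
    have hcomp := (Real.hasDerivAt_arcsin hyn hy1).comp t hdy
    have hF := hcomp.const_mul (1/π)
    rw [hKrs t htab]
    exact hF
  have hnonneg : ∀ t ∈ Set.Ioo m1 m2, 0 ≤ Krs 2 r s t := by
    intro t ht
    rw [hKrs t (hsub ht)]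
    have ht0 : 0 < t := lt_of_le_of_lt (le_trans hP0.le h1) ht.1
    positivity
  -- interval integrabilities
  have hii2 : IntervalIntegrable (Krs 2 r s) volume m1 m2 := by
    apply intervalIntegral.intervalIntegrable_deriv_of_nonneg hFc.continuousOn
    · intro x hx
      rw [min_eq_left h12, max_eq_right h12] at hx
      exact hderiv x hx
    · intro x hx
      rw [min_eq_left h12, max_eq_right h12] at hx
      exact hnonneg x hx
  have hii1 : IntervalIntegrable (Krs 2 r s) volume P m1 := by
    rw [intervalIntegrable_iff_integrableOn_Ioc_of_le h1]
    exact (integrableOn_congr_fun hzero1 measurableSet_Ioc).mpr (integrableOn_zero)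
  have hii3 : IntervalIntegrable (Krs 2 r s) volume m2 Q := by
    rw [intervalIntegrable_iff_integrableOn_Ioc_of_le h2Q]
    exact (integrableOn_congr_fun hzero2 measurableSet_Ioc).mpr (integrableOn_zero)
  have hint1 : ∫ t in P..m1, Krs 2 r s t = 0 := by
    rw [intervalIntegral.integral_of_le h1,
      MeasureTheory.setIntegral_congr_fun measurableSet_Ioc hzero1]
    simp
  have hint3 : ∫ t in m2..Q, Krs 2 r s t = 0 := by
    rw [intervalIntegral.integral_of_le h2Q,
      MeasureTheory.setIntegral_congr_fun measurableSet_Ioc hzero2]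
    simp
  have hmid : ∫ t in m1..m2, Krs 2 r s t = F m2 - F m1 :=
    intervalIntegral.integral_eq_sub_of_hasDeriv_right_of_le h12 hFc.continuousOn
      (fun x hx => (hderiv x hx).hasDerivWithinAt) hii2
  have hsplit : ∫ t in P..Q, Krs 2 r s t = F m2 - F m1 := by
    rw [← intervalIntegral.integral_add_adjacent_intervals (hii1.trans hii2) hii3,
      ← intervalIntegral.integral_add_adjacent_intervals hii1 hii2,
      hint1, hint3, hmid]
    ring
  rw [hsplit]
  rcases eq_or_lt_of_le h12 with heq | hlt
  · rw [heq]
    simp only [sub_self]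
    positivity
  -- m1 < m2 case
  have hmaxa : max P a ≤ Q := by
    by_contra h
    push_neg at h
    have : m1 = Q := min_eq_left h.le
    linarith
  have ham1 : a ≤ m1 := by
    rw [hm1def, min_eq_right hmaxa]; exact le_max_right _ _
  have hPb : P ≤ b := by
    by_contra h
    push_neg at h
    have : m2 ≤ P := le_trans (min_le_right _ _) (by rw [max_eq_left h.le])
    linarith
  have hm2b : m2 ≤ b := le_trans (min_le_right _ _) (by rw [max_eq_right hPb])
  have hkey := lemC hε0 hε hsr hs h1 h12 h2Q ham1 hm2b
  have hFval : F m2 - F m1 = (1/π) * (arcsin (y m2) - arcsin (y m1)) := by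
    simp only [hFdef]
    ring
  rw [hFval]
  have hπ : 0 < π := Real.pi_pos
  have h9 : arcsin (y m2) - arcsin (y m1) ≤ 22 * Real.sqrt 2 / 5 * Real.sqrt ε := hkey
  calc (1/π) * (arcsin (y m2) - arcsin (y m1))
      ≤ (1/π) * (22 * Real.sqrt 2 / 5 * Real.sqrt ε) := by
        apply mul_le_mul_of_nonneg_left h9 (by positivity)
    _ = 22 * Real.sqrt 2 / (5 * π) * Real.sqrt ε := by
        field_simp

/-- For `d = 2` and `0 < ε ≤ 1/11`, the kernel supremum is at most `(22√2/(5π))√ε`. -/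
theorem Ksup_bound_dim_two (ε : ℝ) (hε0 : 0 < ε) (hε : ε ≤ 1/11) :
    Ksup 2 ε ≤ (22 * Real.sqrt 2 / (5 * Real.pi)) * Real.sqrt ε := by
  have h0 : (0:ℝ) ≤ 22 * Real.sqrt 2 / (5 * Real.pi) * Real.sqrt ε := by positivity
  apply Real.sSup_le _ h0
  rintro v ⟨r, s, hsr, hs, rfl⟩
  exact integral_bound ε r s hε0 hε hsr hs
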